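/- Let U be the group of invertible upper triangular n×n matrices over a field F, and L the group of invertible lower triangular matrices over F. For any M ∈ GL_n(F), there exist unique w ∈ S_n, B ∈ U, and A ∈ w_* such that M = B·A, where w_* is the set of matrices with A_{w(i),i} = 1 for all i, A_{w(i),j} arbitrary whenever i < j and w(i) > w(j), and all other entries zero. (Bruhat decomposition in concrete form.) -/

import Mathlib

open Matrix Fin

private lemma tri_unit_iff {F : Type*} [Field F] {n : ℕ} (B : Matrix (Fin n) (Fin n) F)
    (h : ∀ i j, j < i → B i j = 0) : IsUnit B ↔ ∀ i, B i i ≠ 0 := by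
  rw [Matrix.isUnit_iff_isUnit_det, isUnit_iff_ne_zero,
    Matrix.det_of_upperTriangular (fun i j hij => h i j hij), Finset.prod_ne_zero_iff]
  simp

private theorem bruhat (F : Type*) [Field F] :
    ∀ (n : ℕ) (M : Matrix (Fin n) (Fin n) F), IsUnit M →
    ∃! t : Equiv.Perm (Fin n) × Matrix (Fin n) (Fin n) F × Matrix (Fin n) (Fin n) F,
      (IsUnit t.2.1 ∧ ∀ i j : Fin n, j < i → t.2.1 i j = 0) ∧
      ((∀ i : Fin n, t.2.2 (t.1 i) i = 1) ∧
        ∀ i j : Fin n, j ≠ i → ¬(i < j ∧ t.1 j < t.1 i) → t.2.2 (t.1 i) j = 0) ∧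
      M = t.2.1 * t.2.2 := by
  intro n
  induction n with
  | zero =>
    intro M _
    refine ⟨(1, 1, 1), ⟨⟨isUnit_one, fun i => i.elim0⟩, ⟨fun i => i.elim0, fun i => i.elim0⟩,
      ?_⟩, ?_⟩
    · ext i; exact i.elim0
    · rintro ⟨w1, B1, A1⟩ _
      refine Prod.ext ?_ (Prod.ext ?_ ?_)
      · exact Equiv.ext fun i => i.elim0
      · ext i; exact i.elim0
      · ext i; exact i.elim0
  | succ n ih =>
    intro M hM
    classical
    have hdet : M.det ≠ 0 := by
      rw [Matrix.isUnit_iff_isUnit_det, isUnit_iff_ne_zero] at hM; exact hM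
    -- last row nonzero
    have hrow : ∃ j, M (last n) j ≠ 0 := by
      by_contra h
      push_neg at h
      exact hdet (Matrix.det_eq_zero_of_row_eq_zero (last n) h)
    -- minimal nonzero column of last row
    set s : Finset (Fin (n+1)) := Finset.univ.filter (fun j => M (last n) j ≠ 0) with hs
    have hsne : s.Nonempty := by
      obtain ⟨j, hj⟩ := hrow
      exact ⟨j, by simp [hs, hj]⟩
    set i0 : Fin (n+1) := s.min' hsne with hi0def
    have hi0 : M (last n) i0 ≠ 0 := by
      have := s.min'_mem hsne
      simpa [hs] using this
    have hmin : ∀ j, j < i0 → M (last n) j = 0 := by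
      intro j hj
      by_contra h
      exact absurd (s.min'_le j (by simp [hs, h])) (not_le.mpr hj)
    set p : F := M (last n) i0 with hpdef
    have hp : p ≠ 0 := hi0
    -- the reduced matrix
    set N : Matrix (Fin n) (Fin n) F := Matrix.of
      (fun r j => M r.castSucc (i0.succAbove j) - M r.castSucc i0 / p * M (last n) (i0.succAbove j))
      with hNdef
    -- elimination matrix
    set E : Matrix (Fin (n+1)) (Fin (n+1)) F := Matrix.of
      (fun r c => if r = c then 1 else if c = last n then -(M r i0 / p) else 0) with hEdef
    have hEmul : ∀ r j, (E * M) r j =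
        if r = last n then M (last n) j else M r j - M r i0 / p * M (last n) j := by
      intro r j
      rw [Matrix.mul_apply, Fin.sum_univ_castSucc]
      induction r using Fin.lastCases with
      | last =>
        rw [if_pos rfl]
        have h1 : ∀ k : Fin n, E (last n) k.castSucc * M k.castSucc j = 0 := by
          intro k
          have : E (last n) k.castSucc = 0 := by
            simp [hEdef, (Fin.castSucc_lt_last k).ne', (Fin.castSucc_lt_last k).ne]
          rw [this, zero_mul]
        rw [Finset.sum_eq_zero (fun k _ => h1 k), zero_add]
        simp [hEdef]
      | cast r =>
        rw [if_neg (Fin.castSucc_lt_last r).ne]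
        have h1 : ∀ k : Fin n, E r.castSucc k.castSucc * M k.castSucc j =
            if r = k then M k.castSucc j else 0 := by
          intro k
          simp only [hEdef, Matrix.of_apply, (Fin.castSucc_lt_last k).ne, if_false,
            Fin.castSucc_inj]
          split <;> simp
        rw [Finset.sum_congr rfl (fun k _ => h1 k), Finset.sum_ite_eq _ r, if_pos (Finset.mem_univ r)]
        have h2 : E r.castSucc (last n) = -(M r.castSucc i0 / p) := by
          simp [hEdef, (Fin.castSucc_lt_last r).ne]
        rw [h2]
        ring
    have hcol : ∀ r : Fin (n+1), r ≠ last n → (E * M) r i0 = 0 := by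
      intro r hr
      rw [hEmul, if_neg hr, div_mul_cancel₀ _ hp, sub_self]
    have hEMlast : (E * M) (last n) i0 = p := by rw [hEmul, if_pos rfl]
    have hsub : (E * M).submatrix Fin.castSucc i0.succAbove = N := by
      ext r j
      rw [Matrix.submatrix_apply, hEmul, if_neg (Fin.castSucc_lt_last r).ne]
      rfl
    have hEtri : ∀ i j : Fin (n+1), j < i → E i j = 0 := by
      intro i j hij
      have hj : j ≠ last n := by
        intro h
        exact absurd (h ▸ hij) (Fin.not_lt.mpr (Fin.le_last i))
      simp only [hEdef, Matrix.of_apply]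
      rw [if_neg (ne_of_gt hij), if_neg hj]
    have hdetE : E.det = 1 := by
      rw [Matrix.det_of_upperTriangular (fun i j hij => hEtri i j hij)]
      simp [hEdef]
    have hdetN : N.det ≠ 0 := by
      have h1 : (E * M).det = M.det := by rw [Matrix.det_mul, hdetE, one_mul]
      have h2 := Matrix.det_succ_column (E * M) i0
      rw [Finset.sum_eq_single (last n) (fun r _ hr => by rw [hcol r hr]; ring)
        (fun h => absurd (Finset.mem_univ _) h)] at h2
      rw [hEMlast, Fin.succAbove_last, hsub] at h2
      intro h0
      rw [h2, h0] at h1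
      rw [← h1] at hdet
      simp at hdet
    have hNunit : IsUnit N := by
      rw [Matrix.isUnit_iff_isUnit_det, isUnit_iff_ne_zero]; exact hdetN
    obtain ⟨⟨w', B', A'⟩, ⟨⟨hB'u, hB't⟩, ⟨hA'1, hA'0⟩, hNfact⟩, uniq'⟩ := ih N hNunit
    replace hB'u : IsUnit B' := hB'u
    replace hB't : ∀ i j : Fin n, j < i → B' i j = 0 := hB't
    replace hA'1 : ∀ i, A' (w' i) i = 1 := hA'1
    replace hA'0 : ∀ i j : Fin n, j ≠ i → ¬(i < j ∧ w' j < w' i) → A' (w' i) j = 0 := hA'0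
    replace hNfact : N = B' * A' := hNfact
    have hcases : ∀ x : Fin (n+1), x = i0 ∨ ∃ j, x = i0.succAbove j := by
      intro x
      by_cases h : x = i0
      · exact Or.inl h
      · exact Or.inr ((Fin.exists_succAbove_eq h).imp (fun j hj => hj.symm))
    -- the permutation
    set f : Fin (n+1) → Fin (n+1) := i0.insertNth (last n) (fun j => (w' j).castSucc) with hfdef
    have hfi0 : f i0 = last n := Fin.insertNth_apply_same i0 _ _
    have hfsa : ∀ j, f (i0.succAbove j) = (w' j).castSucc := fun j =>
      Fin.insertNth_apply_succAbove i0 _ _ j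
    have hfinj : Function.Injective f := by
      intro a b hab
      rcases hcases a with ha | ⟨a', ha⟩ <;> rcases hcases b with hb | ⟨b', hb⟩
      · rw [ha, hb]
      · rw [ha, hb, hfi0, hfsa] at hab
        exact absurd hab.symm (Fin.castSucc_lt_last _).ne
      · rw [ha, hb, hfi0, hfsa] at hab
        exact absurd hab (Fin.castSucc_lt_last _).ne
      · rw [ha, hb, hfsa, hfsa] at hab
        rw [ha, hb, w'.injective (Fin.castSucc_inj.mp hab)]
    set w : Equiv.Perm (Fin (n+1)) :=
      Equiv.ofBijective f (Finite.injective_iff_bijective.mp hfinj) with hwdef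
    have hwapp : ∀ x, w x = f x := fun x => rfl
    -- the matrices
    set B : Matrix (Fin (n+1)) (Fin (n+1)) F := Matrix.of (fun r c =>
      if hc : c = last n then M r i0 else
        if hr : r = last n then 0 else B' (r.castPred hr) (c.castPred hc)) with hBdef
    set A : Matrix (Fin (n+1)) (Fin (n+1)) F := Matrix.of (fun r c =>
      if hr : r = last n then M (last n) c / p else
        i0.insertNth (α := fun _ => F) (0 : F) (fun c' => A' (r.castPred hr) c') c) with hAdef
    -- B entries
    have hBlastcol : ∀ r, B r (last n) = M r i0 := fun r => dif_pos rfl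
    have hBlastrow : ∀ c (hc : c ≠ last n), B (last n) c = 0 := by
      intro c hc; simp [hBdef, Matrix.of_apply, dif_neg hc]
    have hBcast : ∀ (r c : Fin n), B r.castSucc c.castSucc = B' r c := by
      intro r c
      simp only [hBdef, Matrix.of_apply, dif_neg (Fin.castSucc_lt_last c).ne,
        dif_neg (Fin.castSucc_lt_last r).ne, Fin.castPred_castSucc]
    -- A entries
    have hAlast : ∀ c, A (last n) c = M (last n) c / p := fun c => dif_pos rfl
    have hAcol : ∀ (r : Fin n), A r.castSucc i0 = 0 := by
      intro r
      simp only [hAdef, Matrix.of_apply, dif_neg (Fin.castSucc_lt_last r).ne]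
      exact Fin.insertNth_apply_same i0 _ _
    have hAcast : ∀ (r c : Fin n), A r.castSucc (i0.succAbove c) = A' r c := by
      intro r c
      simp only [hAdef, Matrix.of_apply, dif_neg (Fin.castSucc_lt_last r).ne]
      rw [Fin.insertNth_apply_succAbove, Fin.castPred_castSucc]
    -- triangularity of B
    have hBtri : ∀ i j : Fin (n+1), j < i → B i j = 0 := by
      intro i j hij
      have hj : j ≠ last n := fun h => absurd (h ▸ hij) (Fin.not_lt.mpr (Fin.le_last i))
      have hi : i ≠ last n ∨ i = last n := (em _).symm
      rcases em (i = last n) with hi | hi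
      · rw [hi]; exact hBlastrow j hj
      · simp only [hBdef, Matrix.of_apply, dif_neg hj, dif_neg hi]
        refine hB't _ _ ?_
        rw [← Fin.castSucc_lt_castSucc_iff, Fin.castSucc_castPred, Fin.castSucc_castPred]
        exact hij
    -- invertibility of B
    have hB'diag : ∀ i, B' i i ≠ 0 := (tri_unit_iff B' hB't).mp hB'u
    have hBu : IsUnit B := by
      rw [tri_unit_iff B hBtri]
      intro i
      rcases em (i = last n) with hi | hi
      · rw [hi, hBlastcol, ← hpdef]; exact hp
      · simp only [hBdef, Matrix.of_apply, dif_neg hi]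
        exact hB'diag _
    -- A conditions
    have hA1 : ∀ i, A (w i) i = 1 := by
      intro i
      rcases hcases i with hi | ⟨i', hi⟩
      · rw [hi, hwapp, hfi0, hAlast, ← hpdef, div_self hp]
      · rw [hi, hwapp, hfsa, hAcast]
        exact hA'1 i'
    have hA0 : ∀ i j, j ≠ i → ¬(i < j ∧ w j < w i) → A (w i) j = 0 := by
      intro i j hji hcond
      rcases hcases i with hi | ⟨i', hi⟩
      · rw [hi] at hji hcond ⊢
        rw [hwapp, hfi0, hAlast]
        have hwj : w j ≠ last n := by
          intro h
          exact hji (w.injective (by rw [h, hwapp, hfi0]))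
        have hjlt : j < i0 := by
          rcases Fin.lt_or_lt_of_ne hji with h | h
          · exact h
          · exact absurd ⟨h, by rw [hwapp i0, hfi0]; exact Fin.lt_last_iff_ne_last.mpr hwj⟩ hcond
        rw [hmin j hjlt, zero_div]
      · rw [hi] at hji hcond ⊢
        rw [hwapp, hfsa]
        rcases hcases j with hj | ⟨j', hj⟩
        · rw [hj]; exact hAcol _
        · rw [hj] at hji hcond ⊢
          rw [hAcast]
          refine hA'0 i' j' (fun h => hji (by rw [h])) (fun ⟨h1, h2⟩ => hcond ?_)
          refine ⟨Fin.succAbove_lt_succAbove_iff.mpr h1, ?_⟩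
          simp only [hwapp, hfsa]
          exact Fin.castSucc_lt_castSucc_iff.mpr h2
    -- the factorization
    have hfact : M = B * A := by
      ext r j
      rw [Matrix.mul_apply, Fin.sum_univ_castSucc, hBlastcol, hAlast]
      rcases em (r = last n) with hr | hr
      · subst hr
        rw [Finset.sum_eq_zero (fun c _ => by
          rw [hBlastrow c.castSucc (Fin.castSucc_lt_last c).ne, zero_mul]), zero_add,
          ← hpdef, mul_comm, div_mul_cancel₀ _ hp]
      · obtain ⟨r', rfl⟩ : ∃ r', r = r'.castSucc := ⟨r.castPred hr, (Fin.castSucc_castPred r hr).symm⟩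
        rcases hcases j with hj | ⟨j', hj⟩
        · subst hj
          rw [Finset.sum_eq_zero (fun c _ => by rw [hBcast, hAcol, mul_zero]), zero_add,
            ← hpdef, div_self hp, mul_one]
        · subst hj
          have hsum : ∀ c : Fin n, B r'.castSucc c.castSucc * A c.castSucc (i0.succAbove j') =
              B' r' c * A' c j' := fun c => by rw [hBcast, hAcast]
          rw [Finset.sum_congr rfl (fun c _ => hsum c), ← Matrix.mul_apply, ← hNfact, hNdef]
          simp only [Matrix.of_apply]
          field_simp
          ring
    have hwi0 : w i0 = last n := (hwapp i0).trans hfi0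
    have hwsa : ∀ j, w (i0.succAbove j) = (w' j).castSucc := fun j => (hwapp _).trans (hfsa j)
    refine ⟨(w, B, A), ⟨⟨hBu, hBtri⟩, ⟨hA1, hA0⟩, hfact⟩, ?_⟩
    rintro ⟨w1, B1, A1⟩ ⟨⟨hB1u, hB1t⟩, ⟨hA11, hA10⟩, hfac1⟩
    replace hB1u : IsUnit B1 := hB1u
    replace hB1t : ∀ i j : Fin (n+1), j < i → B1 i j = 0 := hB1t
    replace hA11 : ∀ i, A1 (w1 i) i = 1 := hA11
    replace hA10 : ∀ i j : Fin (n+1), j ≠ i → ¬(i < j ∧ w1 j < w1 i) → A1 (w1 i) j = 0 := hA10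
    replace hfac1 : M = B1 * A1 := hfac1
    have hdiag1 : ∀ i, B1 i i ≠ 0 := (tri_unit_iff B1 hB1t).mp hB1u
    -- last row of M
    have hMrow : ∀ j, M (last n) j = B1 (last n) (last n) * A1 (last n) j := by
      intro j
      rw [hfac1, Matrix.mul_apply, Fin.sum_univ_castSucc,
        Finset.sum_eq_zero (fun c _ => by
          rw [hB1t (last n) c.castSucc (Fin.castSucc_lt_last c), zero_mul]), zero_add]
    set i1 : Fin (n+1) := w1.symm (last n) with hi1def
    have hw1i1 : w1 i1 = last n := w1.apply_symm_apply _
    have hA1pos : A1 (last n) i1 = 1 := by rw [← hw1i1]; exact hA11 i1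
    have hA1left : ∀ j, j < i1 → A1 (last n) j = 0 := by
      intro j hj
      rw [← hw1i1]
      exact hA10 i1 j hj.ne (fun h => absurd hj (Fin.not_lt.mpr h.1.le))
    -- identify i1 = i0
    have hi1 : i1 = i0 := by
      rcases lt_trichotomy i1 i0 with h | h | h
      · exfalso
        apply hdiag1 (last n)
        have := hmin i1 h
        rw [hMrow i1, hA1pos, mul_one] at this
        exact this
      · exact h
      · exfalso
        apply hi0
        rw [hpdef, hMrow i0, hA1left i0 h, mul_zero]
    rw [hi1] at hw1i1 hA1pos hA1left
    have hB1ll : B1 (last n) (last n) = p := by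
      rw [hpdef, hMrow i0, hA1pos, mul_one]
    have hA1last : ∀ j, A1 (last n) j = M (last n) j / p := by
      intro j
      rw [hMrow j, hB1ll, mul_comm, mul_div_assoc, div_self hp, mul_one]
    have hA1col : ∀ r, r ≠ last n → A1 r i0 = 0 := by
      intro r hr
      have h1 : w1 (w1.symm r) = r := w1.apply_symm_apply r
      have h2 : i0 ≠ w1.symm r := by
        intro h
        exact hr (by rw [← h1, ← h, hw1i1])
      rw [← h1]
      exact hA10 _ i0 h2 (fun h => absurd (hw1i1 ▸ h.2) (Fin.not_lt.mpr (Fin.le_last _)))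
    have hB1col : ∀ r, B1 r (last n) = M r i0 := by
      intro r
      rw [hfac1, Matrix.mul_apply, Fin.sum_univ_castSucc,
        Finset.sum_eq_zero (fun c _ => by
          rw [hA1col c.castSucc (Fin.castSucc_lt_last c).ne, mul_zero]), zero_add, hA1pos, mul_one]
    -- minor permutation
    have hne : ∀ c : Fin n, w1 (i0.succAbove c) ≠ last n := by
      intro c h
      exact Fin.succAbove_ne i0 c (w1.injective (h.trans hw1i1.symm))
    set g : Fin n → Fin n := fun c => (w1 (i0.succAbove c)).castPred (hne c) with hgdef
    have hgcast : ∀ c, (g c).castSucc = w1 (i0.succAbove c) := fun c => Fin.castSucc_castPred _ _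
    have hginj : Function.Injective g := by
      intro a b hab
      have : w1 (i0.succAbove a) = w1 (i0.succAbove b) := by
        rw [← hgcast, ← hgcast, hab]
      exact Fin.succAbove_right_injective (w1.injective this)
    set w1'' : Equiv.Perm (Fin n) :=
      Equiv.ofBijective g (Finite.injective_iff_bijective.mp hginj) with hw1''def
    have hw1''app : ∀ c, w1'' c = g c := fun c => rfl
    -- the minor decomposition
    have hminor : (w1'', B1.submatrix Fin.castSucc Fin.castSucc,
        A1.submatrix Fin.castSucc i0.succAbove) = (w', B', A') := by
      apply uniq'
      refine ⟨⟨?_, ?_⟩, ⟨?_, ?_⟩, ?_⟩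
      · rw [tri_unit_iff _ (fun i j hij => by
          exact hB1t _ _ (Fin.castSucc_lt_castSucc_iff.mpr hij))]
        intro i
        exact hdiag1 i.castSucc
      · intro i j hij
        exact hB1t _ _ (Fin.castSucc_lt_castSucc_iff.mpr hij)
      · intro c
        show A1 (w1'' c).castSucc (i0.succAbove c) = 1
        rw [hw1''app, hgcast]
        exact hA11 _
      · intro c d hdc hcond
        show A1 (w1'' c).castSucc (i0.succAbove d) = 0
        rw [hw1''app, hgcast]
        refine hA10 _ _ (fun h => hdc (Fin.succAbove_right_injective h)) ?_
        rintro ⟨h1, h2⟩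
        apply hcond
        refine ⟨Fin.succAbove_lt_succAbove_iff.mp h1, ?_⟩
        rw [← Fin.castSucc_lt_castSucc_iff, hw1''app, hw1''app, hgcast, hgcast]
        exact h2
      · ext r j
        rw [Matrix.mul_apply]
        have hsum : ∀ c : Fin n,
            (B1.submatrix Fin.castSucc Fin.castSucc) r c *
              (A1.submatrix Fin.castSucc i0.succAbove) c j =
            B1 r.castSucc c.castSucc * A1 c.castSucc (i0.succAbove j) := fun c => rfl
        rw [Finset.sum_congr rfl (fun c _ => hsum c)]
        have hMexp : M r.castSucc (i0.succAbove j) =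
            (∑ c : Fin n, B1 r.castSucc c.castSucc * A1 c.castSucc (i0.succAbove j)) +
            M r.castSucc i0 * (M (last n) (i0.succAbove j) / p) := by
          rw [hfac1, Matrix.mul_apply, Fin.sum_univ_castSucc, hB1col, hA1last, ← hfac1]
        have hS : (∑ c : Fin n, B1 r.castSucc c.castSucc * A1 c.castSucc (i0.succAbove j)) =
            M r.castSucc (i0.succAbove j) - M r.castSucc i0 * (M (last n) (i0.succAbove j) / p) := by
          rw [hMexp]; ring
        rw [hS, hNdef]
        simp only [Matrix.of_apply]
        ring
    obtain ⟨hw'', hBm, hAm⟩ : w1'' = w' ∧ B1.submatrix Fin.castSucc Fin.castSucc = B' ∧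
        A1.submatrix Fin.castSucc i0.succAbove = A' := by
      have h1 := congrArg Prod.fst hminor
      have h2 := congrArg (fun t => t.2.1) hminor
      have h3 := congrArg (fun t => t.2.2) hminor
      exact ⟨h1, h2, h3⟩
    refine Prod.ext ?_ (Prod.ext ?_ ?_)
    · -- w1 = w
      show w1 = w
      apply Equiv.ext
      intro x
      rcases hcases x with hx | ⟨x', hx⟩
      · rw [hx, hw1i1, hwi0]
      · rw [hx, hwsa, ← hw'', ← hgcast, hw1''app]
    · -- B1 = B
      show B1 = B
      ext r c
      rcases em (c = last n) with hc | hc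
      · rw [hc, hB1col, hBlastcol]
      · obtain ⟨c', rfl⟩ : ∃ c', c = c'.castSucc := ⟨c.castPred hc, (Fin.castSucc_castPred c hc).symm⟩
        rcases em (r = last n) with hr | hr
        · rw [hr, hBlastrow _ hc, hB1t _ _ (Fin.castSucc_lt_last c')]
        · obtain ⟨r', rfl⟩ : ∃ r', r = r'.castSucc :=
            ⟨r.castPred hr, (Fin.castSucc_castPred r hr).symm⟩
          have : B1 r'.castSucc c'.castSucc = B' r' c' := by
            rw [← hBm]; rfl
          rw [this, hBcast]
    · -- A1 = A
      show A1 = A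
      ext r c
      rcases em (r = last n) with hr | hr
      · rw [hr, hA1last, hAlast]
      · obtain ⟨r', rfl⟩ : ∃ r', r = r'.castSucc := ⟨r.castPred hr, (Fin.castSucc_castPred r hr).symm⟩
        rcases hcases c with hc | ⟨c', hc⟩
        · rw [hc, hA1col _ hr, hAcol]
        · have : A1 r'.castSucc (i0.succAbove c') = A' r' c' := by
            rw [← hAm]; rfl
          rw [hc, this, hAcast]

/-- Bruhat decomposition in concrete form: every `M ∈ GL_n(F)` factors uniquely as
`M = B · A` with `B` invertible upper triangular and `A` an SE `w`-augmented matrix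
for a (unique) permutation `w`: `A_{w(i),i} = 1`, the entry `A_{w(i),j}` is arbitrary
when `(i,j)` is an inversion of `w`, and all other entries are `0`. -/
theorem stmt10 (F : Type*) [Field F] (n : ℕ) (M : Matrix (Fin n) (Fin n) F)
    (hM : IsUnit M) :
    ∃! t : Equiv.Perm (Fin n) × Matrix (Fin n) (Fin n) F × Matrix (Fin n) (Fin n) F,
      (IsUnit t.2.1 ∧ ∀ i j : Fin n, j < i → t.2.1 i j = 0) ∧
      ((∀ i : Fin n, t.2.2 (t.1 i) i = 1) ∧
        ∀ i j : Fin n, j ≠ i → ¬(i < j ∧ t.1 j < t.1 i) → t.2.2 (t.1 i) j = 0) ∧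
      M = t.2.1 * t.2.2 :=
  bruhat F n M hM
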